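/- Let n >= 6 and t >= 1 be integers and suppose r is a positive integer with n + r <= t*n such that (n/2)^(t*n) * t^(-t) < 2^(r*t) * n! * (r-1)! * 2^(2n + 6r - 3). Then r > ((t-1)*n*lg n - 6*t*n - t*lg t) / (lg n + t + lg t). -/
import Mathlib
open Real

lemma pow_succ_ge (m : ℕ) (hm : 1 ≤ m) : 2 * (m:ℝ)^m ≤ ((m:ℝ)+1)^m := by
  have hm0 : (0:ℝ) < m := by exact_mod_cast hm
  have ha : (0:ℝ) ≤ 1/(m:ℝ) := by positivity
  have h := one_add_mul_le_pow (a := 1/(m:ℝ)) (by linarith) m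
  have h2 : (1 + (m:ℝ) * (1/m)) = 2 := by field_simp; norm_num
  rw [h2] at h
  have h3 : ((m:ℝ)+1)^m = (m:ℝ)^m * (1 + 1/m)^m := by
    rw [← mul_pow]; congr 1; field_simp
  rw [h3]
  nlinarith [pow_pos hm0 m]

lemma factA : ∀ n : ℕ, 6 ≤ n → ((Nat.factorial n : ℝ)) * 2^n ≤ (n:ℝ)^n := by
  intro n hn
  induction n, hn using Nat.le_induction with
  | base => norm_num [Nat.factorial]
  | succ m hm ih =>
    have h1 : 2 * (m:ℝ)^m ≤ ((m:ℝ)+1)^m := pow_succ_ge m (by omega)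
    calc ((Nat.factorial (m+1) : ℝ)) * 2^(m+1)
        = ((m:ℝ)+1) * (((Nat.factorial m : ℝ)) * 2^m) * 2 := by
          push_cast [Nat.factorial_succ]; ring
      _ ≤ ((m:ℝ)+1) * ((m:ℝ)^m) * 2 := by gcongr
      _ = ((m:ℝ)+1) * (2 * (m:ℝ)^m) := by ring
      _ ≤ ((m:ℝ)+1) * ((m:ℝ)+1)^m := by gcongr
      _ = ((m+1:ℕ):ℝ)^(m+1) := by push_cast; ring

lemma factB : ∀ m : ℕ, ((Nat.factorial m : ℝ)) * 2^m ≤ 2 * (m:ℝ)^m := by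
  intro m
  match m with
  | 0 => norm_num
  | (k+1) =>
    induction k with
    | zero => norm_num
    | succ j ih =>
      have h1 : 2 * ((j+1:ℕ):ℝ)^(j+1) ≤ (((j+1:ℕ):ℝ)+1)^(j+1) := pow_succ_ge (j+1) (by omega)
      calc ((Nat.factorial (j+2) : ℝ)) * 2^(j+2)
          = ((j:ℝ)+2) * (((Nat.factorial (j+1) : ℝ)) * 2^(j+1)) * 2 := by
            push_cast [Nat.factorial_succ]; ring
        _ ≤ ((j:ℝ)+2) * (2 * ((j+1:ℕ):ℝ)^(j+1)) * 2 := by gcongr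
        _ ≤ ((j:ℝ)+2) * ((((j+1:ℕ):ℝ)+1)^(j+1)) * 2 := by gcongr
        _ = 2 * (((j:ℝ)+2)^(j+2)) := by push_cast; ring
        _ = 2 * ((j+2:ℕ):ℝ)^(j+2) := by push_cast; ring

theorem stmt_13 (n t r : ℕ) (hn : 6 ≤ n) (ht : 1 ≤ t) (hr : 1 ≤ r)
    (hrt : n + r ≤ t * n)
    (h : ((n : ℝ) / 2) ^ (t * n) * ((t : ℝ) ^ t)⁻¹
        < 2 ^ (r * t) * Nat.factorial n * Nat.factorial (r - 1) * 2 ^ (2 * n + 6 * r - 3)) :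
    (r : ℝ) > (((t : ℝ) - 1) * n * logb 2 n - 6 * t * n - t * logb 2 t)
        / (logb 2 n + t + logb 2 t) := by
  have hn6 : (6:ℝ) ≤ n := by exact_mod_cast hn
  have hnpos : (0:ℝ) < n := by linarith
  have ht1 : (1:ℝ) ≤ t := by exact_mod_cast ht
  have htpos : (0:ℝ) < t := by linarith
  have htn : (0:ℝ) < (t:ℝ) * n := by positivity
  have htn6 : (6:ℝ) ≤ (t:ℝ) * n := by nlinarith
  -- factorial bounds
  have hA : (Nat.factorial n : ℝ) ≤ (n:ℝ)^n / 2^n := by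
    rw [le_div_iff₀ (by positivity)]
    exact factA n hn
  have hB : (Nat.factorial (r-1) : ℝ) ≤ ((t:ℝ)*n)^r / 2^r := by
    rw [le_div_iff₀ (by positivity)]
    obtain ⟨m, rfl⟩ : ∃ m, r = m + 1 := ⟨r - 1, by omega⟩
    simp only [Nat.add_sub_cancel]
    have h1 := factB m
    have h2 : ((m:ℝ))^m ≤ ((t:ℝ)*n)^m := by
      apply pow_le_pow_left₀ (by positivity)
      have hm : (m:ℕ) ≤ t * n := by omega
      calc (m:ℝ) ≤ ((t*n : ℕ):ℝ) := by exact_mod_cast hm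
        _ = (t:ℝ)*n := by push_cast; ring
    calc (Nat.factorial m : ℝ) * 2^(m+1)
        = ((Nat.factorial m : ℝ) * 2^m) * 2 := by ring
      _ ≤ (2 * (m:ℝ)^m) * 2 := by gcongr
      _ = 4 * (m:ℝ)^m := by ring
      _ ≤ 4 * ((t:ℝ)*n)^m := by gcongr
      _ ≤ ((t:ℝ)*n) * ((t:ℝ)*n)^m := by gcongr; linarith
      _ = ((t:ℝ)*n)^(m+1) := by ring
  -- strengthen h
  have h2 : ((n : ℝ) / 2) ^ (t * n) * ((t : ℝ) ^ t)⁻¹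
      < 2 ^ (r * t) * ((n:ℝ)^n / 2^n) * (((t:ℝ)*n)^r / 2^r) * 2 ^ (2 * n + 6 * r - 3) := by
    refine lt_of_lt_of_le h ?_
    have hf1 : (0:ℝ) ≤ (Nat.factorial (r-1) : ℝ) := by positivity
    gcongr <;> positivity
  -- take logs
  have hlog := Real.logb_lt_logb (b := 2) (by norm_num) (by positivity) h2
  set L := logb 2 (n:ℝ) with hL
  set T := logb 2 (t:ℝ) with hT
  have hLpos : 0 < L := Real.logb_pos (by norm_num) (by linarith)
  have hTnn : 0 ≤ T := Real.logb_nonneg (by norm_num) ht1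
  have e1 : logb 2 (((n : ℝ) / 2) ^ (t * n) * ((t : ℝ) ^ t)⁻¹)
      = (t:ℝ)*n*(L - 1) - t*T := by
    rw [Real.logb_mul (by positivity) (by positivity), Real.logb_inv,
      Real.logb_pow, Real.logb_pow,
      Real.logb_div (by positivity) (by norm_num),
      Real.logb_self_eq_one (by norm_num)]
    push_cast
    ring
  have e2 : logb 2 ((2:ℝ) ^ (r * t) * ((n:ℝ)^n / 2^n) * (((t:ℝ)*n)^r / 2^r) * 2 ^ (2 * n + 6 * r - 3))
      = (r:ℝ)*t + ((n:ℝ)*L - n) + ((r:ℝ)*(T + L) - r) + (2*(n:ℝ) + 6*r - 3) := by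
    have hc : ((2 * n + 6 * r - 3 : ℕ) : ℝ) = 2*(n:ℝ) + 6*r - 3 := by
      have : 3 ≤ 2 * n + 6 * r := by omega
      push_cast [Nat.cast_sub this]
      ring
    rw [Real.logb_mul (by positivity) (by positivity),
      Real.logb_mul (by positivity) (by positivity),
      Real.logb_mul (by positivity) (by positivity),
      Real.logb_div (by positivity) (by positivity),
      Real.logb_div (by positivity) (by positivity),
      Real.logb_pow, Real.logb_pow, Real.logb_pow, Real.logb_pow, Real.logb_pow,
      Real.logb_mul (by positivity) (by positivity),
      Real.logb_self_eq_one (by norm_num)]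
    rw [Real.logb_pow, Real.logb_self_eq_one (by norm_num), hc]
    push_cast
    ring
  rw [e1, e2] at hlog
  have hr5 : (n:ℝ) + r ≤ (t:ℝ)*n := by exact_mod_cast hrt
  have hD : 0 < L + (t:ℝ) + T := by linarith
  rw [gt_iff_lt, div_lt_iff₀ hD]
  nlinarith [hlog, hr5, hLpos, hTnn]
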